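/- Let N ⊆ ℝⁿ be a compact neighborhood of 0 and let V : N → ℝ be continuous with V(0) = 0. Then V(y) > 0 for every y ∈ N \ {0} if and only if there exists a class-K function α : [0,∞) → [0,∞) such that α(‖y‖) ≤ V(y) for every y ∈ N. -/

import Mathlib

/-- A function `α : [0,∞) → [0,∞)` is of class K if it is continuous,
strictly increasing, and `α 0 = 0`. -/
def IsClassK (α : ℝ → ℝ) : Prop :=
  ContinuousOn α (Set.Ici 0) ∧ StrictMonoOn α (Set.Ici 0) ∧ α 0 = 0 ∧
    ∀ x ∈ Set.Ici (0 : ℝ), 0 ≤ α x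

theorem stmt_6
    (n : ℕ)
    (N : Set (EuclideanSpace ℝ (Fin n)))
    (hNcpt : IsCompact N) (hNnbd : N ∈ nhds (0 : EuclideanSpace ℝ (Fin n)))
    (V : EuclideanSpace ℝ (Fin n) → ℝ)
    (hVcont : ContinuousOn V N) (hV0 : V 0 = 0) :
    (∀ y ∈ N, y ≠ 0 → 0 < V y) ↔
      ∃ α : ℝ → ℝ, IsClassK α ∧ ∀ y ∈ N, α ‖y‖ ≤ V y := by
  have h0N : (0 : EuclideanSpace ℝ (Fin n)) ∈ N := mem_of_mem_nhds hNnbd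
  constructor
  · intro hpos
    classical
    have hVnn : ∀ y ∈ N, 0 ≤ V y := by
      intro y hy
      rcases eq_or_ne y 0 with rfl | hne
      · simp [hV0]
      · exact (hpos y hy hne).le
    set K : ℝ → Set (EuclideanSpace ℝ (Fin n)) := fun r => N ∩ {y | r ≤ ‖y‖} with hKdef
    have hKcpt : ∀ r, IsCompact (K r) := fun r =>
      hNcpt.inter_right (isClosed_le continuous_const continuous_norm)
    have hKsub : ∀ r, K r ⊆ N := fun r => Set.inter_subset_left
    have hbdd : ∀ r, BddBelow (V '' K r) :=
      fun r => ⟨0, fun v ⟨y, hy, hvy⟩ => hvy ▸ hVnn y (hKsub r hy)⟩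
    set h : ℝ → ℝ := fun r =>
      if hr : (K r).Nonempty then min 1 (sInf (V '' K r)) else 1 with hhdef
    have hle1 : ∀ r, h r ≤ 1 := by
      intro r; simp only [hhdef]; split <;> simp
    have hnn : ∀ r, 0 ≤ h r := by
      intro r; simp only [hhdef]; split
      · rename_i hr
        refine le_min one_pos.le (le_csInf (hr.image V) ?_)
        rintro v ⟨y, hy, rfl⟩; exact hVnn y (hKsub r hy)
      · exact one_pos.le
    have hmono : Monotone h := by
      intro r s hrs
      simp only [hhdef]
      by_cases hs : (K s).Nonempty
      · have hKss : K s ⊆ K r := Set.inter_subset_inter_right _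
          (fun y hy => le_trans hrs hy)
        have hr : (K r).Nonempty := hs.mono hKss
        rw [dif_pos hr, dif_pos hs]
        exact min_le_min le_rfl
          (csInf_le_csInf (hbdd r) (hs.image V) (Set.image_mono (f := V) hKss))
      · rw [dif_neg hs]
        split
        · exact min_le_left _ _
        · exact le_rfl
    have hhleV : ∀ y ∈ N, h ‖y‖ ≤ V y := by
      intro y hy
      have hyK : y ∈ K ‖y‖ := ⟨hy, by simp [Set.mem_setOf_eq]⟩
      have hne : (K ‖y‖).Nonempty := ⟨y, hyK⟩
      simp only [hhdef, dif_pos hne]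
      exact le_trans (min_le_right _ _) (csInf_le (hbdd _) ⟨y, hyK, rfl⟩)
    have hhpos : ∀ r : ℝ, 0 < r → 0 < h r := by
      intro r hr
      simp only [hhdef]
      split
      · rename_i hne
        refine lt_min one_pos ?_
        obtain ⟨x, hxK, hxmin⟩ := (hKcpt r).exists_isMinOn hne
          (hVcont.mono (hKsub r))
        have hx0 : x ≠ 0 := by
          intro h0
          have := hxK.2
          rw [h0] at this
          simp at this
          linarith
        have hVx : 0 < V x := hpos x (hKsub r hxK) hx0
        refine lt_of_lt_of_le hVx (le_csInf (hne.image V) ?_)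
        rintro v ⟨z, hz, rfl⟩
        exact hxmin hz
      · exact one_pos
    -- integrability and primitive
    have hint : ∀ a b : ℝ, IntervalIntegrable h MeasureTheory.volume a b :=
      fun a b => hmono.intervalIntegrable
    set H : ℝ → ℝ := fun r => ∫ t in (0:ℝ)..r, h t with hHdef
    have hHcont : Continuous H :=
      intervalIntegral.continuous_primitive hint 0
    have hHnn : ∀ r : ℝ, 0 ≤ r → 0 ≤ H r := by
      intro r hr
      exact intervalIntegral.integral_nonneg hr (fun x _ => hnn x)
    have hHub : ∀ r : ℝ, 0 ≤ r → H r ≤ r * h r := by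
      intro r hr
      calc H r ≤ ∫ _ in (0:ℝ)..r, h r := by
            refine intervalIntegral.integral_mono_on hr (hint 0 r)
              intervalIntegrable_const ?_
            intro x hx; exact hmono hx.2
        _ = r * h r := by simp
    have hHlb : ∀ a b : ℝ, a ≤ b → (b - a) * h a ≤ H b - H a := by
      intro a b hab
      have : H b - H a = ∫ t in a..b, h t := by
        simp only [hHdef]
        exact intervalIntegral.integral_interval_sub_left (hint 0 b) (hint 0 a)
      rw [this]
      calc (b - a) * h a = ∫ _ in a..b, h a := by simp
        _ ≤ ∫ t in a..b, h t := by
            refine intervalIntegral.integral_mono_on hab intervalIntegrable_const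
              (hint a b) ?_
            intro x hx; exact hmono hx.1
    have hHpos : ∀ b : ℝ, 0 < b → 0 < H b := by
      intro b hb
      have h1 : (b - b/2) * h (b/2) ≤ H b - H (b/2) := hHlb (b/2) b (by linarith)
      have h2 : 0 ≤ H (b/2) := hHnn _ (by linarith)
      have h3 : 0 < h (b/2) := hhpos _ (by linarith)
      nlinarith
    refine ⟨fun r => H r / (1 + r), ⟨?_, ?_, ?_, ?_⟩, ?_⟩
    · exact ContinuousOn.div hHcont.continuousOn
        (by fun_prop)
        (fun x hx => by have : (0:ℝ) ≤ x := hx; positivity)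
    · intro a ha b hb hab
      have ha' : (0:ℝ) ≤ a := ha
      have hb' : (0:ℝ) ≤ b := hb
      rw [div_lt_div_iff₀ (by linarith) (by linarith)]
      rcases eq_or_lt_of_le ha' with rfl | hapos
      · have hH0 : H 0 = 0 := intervalIntegral.integral_same
        rw [hH0]
        have := hHpos b hab
        nlinarith
      · have h1 : H a ≤ a * h a := hHub a ha'
        have h2 : (b - a) * h a ≤ H b - H a := hHlb a b hab.le
        have h3 : 0 < h a := hhpos a hapos
        nlinarith
    · simp [hHdef]
    · intro x hx
      have hx' : (0:ℝ) ≤ x := hx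
      have := hHnn x hx'
      positivity
    · intro y hy
      have hr : (0:ℝ) ≤ ‖y‖ := norm_nonneg y
      rw [div_le_iff₀ (by linarith)]
      calc H ‖y‖ ≤ ‖y‖ * h ‖y‖ := hHub _ hr
        _ ≤ (1 + ‖y‖) * h ‖y‖ := by nlinarith [hnn ‖y‖]
        _ = h ‖y‖ * (1 + ‖y‖) := mul_comm _ _
        _ ≤ V y * (1 + ‖y‖) := by
            have := hhleV y hy
            nlinarith
  · rintro ⟨α, ⟨hc, hm, h0, hnnα⟩, hα⟩ y hy hy0
    have hny : (0:ℝ) < ‖y‖ := norm_pos_iff.mpr hy0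
    have : α 0 < α ‖y‖ := hm (le_refl (0:ℝ)) hny.le hny
    rw [h0] at this
    exact lt_of_lt_of_le this (hα y hy)
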